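/- Let f : ℝ → ℝ be continuous and let u be a solution of the radial equation on an interval [R₁, R₂] with 0 < R₁, such that u'(R₁) = 0 and u(t)·u'(t) ≤ 0 for all t ∈ [R₁, R₂]. Then for every r ∈ [R₁, R₂], m·r^N·I(r) − m·R₁^N·F(u(R₁)) ≥ ∫_{R₁}^{r} t^(N−1)·Q(u(t)) dt. -/

import Mathlib

open Set Filter MeasureTheory

noncomputable def phim (m x : ℝ) : ℝ := |x| ^ (m - 2) * x

noncomputable def Fint (f : ℝ → ℝ) (s : ℝ) : ℝ := ∫ t in (0:ℝ)..s, f t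

noncomputable def Qfun (N m : ℝ) (f : ℝ → ℝ) (s : ℝ) : ℝ :=
  m * N * Fint f s - (N - m) * s * f s

/-- `u` (with derivative function `u'`) is a solution of the radial quasilinear
equation on the set `J`. -/
def IsSolutionOn (N m : ℝ) (f : ℝ → ℝ) (J : Set ℝ) (u u' : ℝ → ℝ) : Prop :=
  (∀ r ∈ J, HasDerivWithinAt u (u' r) J r) ∧ ContinuousOn u' J ∧
    ∃ w' : ℝ → ℝ,
      (∀ r ∈ J ∩ Set.Ioi (0:ℝ),
        HasDerivWithinAt (fun t => phim m (u' t)) (w' r) (J ∩ Set.Ioi (0:ℝ)) r) ∧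
      ContinuousOn w' (J ∩ Set.Ioi (0:ℝ)) ∧
      ∀ r ∈ J ∩ Set.Ioi (0:ℝ), w' r + ((N - 1) / r) * phim m (u' r) + f (u r) = 0

def IsIVPSolutionOn (N m : ℝ) (f : ℝ → ℝ) (α : ℝ) (J : Set ℝ) (u u' : ℝ → ℝ) : Prop :=
  IsSolutionOn N m f J u u' ∧ u 0 = α ∧ u' 0 = 0

/-- Admissible domains for the IVP: `[0,∞)` or `[0,R)` with `0 < R`. -/
def IVPDomain (J : Set ℝ) : Prop :=
  J = Set.Ici (0:ℝ) ∨ ∃ R : ℝ, 0 < R ∧ J = Set.Ico (0:ℝ) R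

/-- The solution `u` of the IVP on `J` cannot be extended to a solution on a
strictly larger admissible domain. -/
def Noncontinuable (N m : ℝ) (f : ℝ → ℝ) (α : ℝ) (J : Set ℝ) (u u' : ℝ → ℝ) : Prop :=
  ∀ J' : Set ℝ, IVPDomain J' → J ⊂ J' →
    ¬ ∃ v v' : ℝ → ℝ, IsIVPSolutionOn N m f α J' v v' ∧ Set.EqOn v u J ∧ Set.EqOn v' u' J

open Classical in
/-- The filter describing the approach to the right endpoint of an IVP domain. -/
noncomputable def domEnd (J : Set ℝ) : Filter ℝ :=
  if J = Set.Ici (0:ℝ) then Filter.atTop else nhdsWithin (sSup J) (Set.Iio (sSup J))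

def LocLipschitzOn (f : ℝ → ℝ) (S : Set ℝ) : Prop :=
  ∀ x ∈ S, ∃ ε : ℝ, 0 < ε ∧ ∃ K : NNReal, LipschitzOnWith K f (Metric.ball x ε ∩ S)

/-- Assumption (f₂). -/
structure Hf2 (f : ℝ → ℝ) (βm βp : ℝ) (γm γp : EReal) : Prop where
  hβm : βm < 0
  hβp : 0 < βp
  hFneg : ∀ s : ℝ, s ∈ Set.Ioo βm βp → s ≠ 0 → Fint f s < 0
  hFβm : Fint f βm = 0
  hFβp : Fint f βp = 0
  hγp : (βp : EReal) < γp
  hγm : γm < (βm : EReal)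
  hfpos : ∀ s : ℝ, βp < s → (s : EReal) < γp → 0 < f s
  hfneg : ∀ s : ℝ, γm < (s : EReal) → s < βm → f s < 0
  hγpzero : ∀ s : ℝ, (s : EReal) = γp → f s = 0
  hγmzero : ∀ s : ℝ, (s : EReal) = γm → f s = 0
  hlim : ∃ L : EReal,
    Filter.Tendsto (fun s : ℝ => (Fint f s : EReal))
      (Filter.comap Real.toEReal (nhdsWithin γp (Set.Iio γp))) (nhds L) ∧
    Filter.Tendsto (fun s : ℝ => (Fint f s : EReal))
      (Filter.comap Real.toEReal (nhdsWithin γm (Set.Ioi γm))) (nhds L)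
  hlip : LocLipschitzOn f {s : ℝ | (γm < (s : EReal) ∧ s < 0) ∨ (0 < s ∧ (s : EReal) < γp)}

/-- Assumption (f₃). -/
def Hf3 (N m : ℝ) (f : ℝ → ℝ) (βm βp : ℝ) (γm γp : EReal) : Prop :=
  (γp = ⊤ →
    (∃ βb : ℝ, βp < βb ∧ ∀ s : ℝ, βb ≤ s → 0 ≤ Qfun N m f s) ∧
    (∃ θ : ℝ, θ ∈ Set.Ioo (0:ℝ) 1 ∧
      Filter.Tendsto (fun s : ℝ =>
        sInf ((fun p : ℝ × ℝ =>
          Qfun N m f p.2 * ((|s| ^ (m - 2) * s) / f p.1) ^ (N / m)) ''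
            (Set.Icc (θ * s) s ×ˢ Set.Icc (θ * s) s)))
        Filter.atTop Filter.atTop)) ∧
  (γm = ⊥ →
    (∃ βb : ℝ, -βb < βm ∧ ∀ s : ℝ, s ≤ -βb → 0 ≤ Qfun N m f s) ∧
    (∃ θ : ℝ, θ ∈ Set.Ioo (0:ℝ) 1 ∧
      Filter.Tendsto (fun s : ℝ =>
        sInf ((fun p : ℝ × ℝ =>
          Qfun N m f p.2 * ((|s| ^ (m - 2) * s) / f p.1) ^ (N / m)) ''
            (Set.Icc s (θ * s) ×ˢ Set.Icc s (θ * s))))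
        Filter.atBot Filter.atTop))

/-- Assumption (f₄). -/
def Hf4 (N m : ℝ) (f : ℝ → ℝ) (βm βp : ℝ) (γm γp : EReal) : Prop :=
  (γp ≠ ⊤ → ∃ L₀ : ℝ, 0 < L₀ ∧ ∃ βb : ℝ, βp < βb ∧
    ∀ s : ℝ, βb ≤ s → (s : EReal) < γp → f s ≤ L₀ * (γp.toReal - s) ^ (m - 1)) ∧
  (γm ≠ ⊥ → ∃ L₀ : ℝ, 0 < L₀ ∧ ∃ βb : ℝ, -βm < βb ∧
    ∀ s : ℝ, γm < (s : EReal) → s ≤ -βb → -f s ≤ L₀ * (s - γm.toReal) ^ (m - 1))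

lemma phim_zero (m : ℝ) : phim m 0 = 0 := by simp [phim]

section lems
variable {m : ℝ} (hm : 1 < m)
include hm

lemma abs_phim (x : ℝ) : |phim m x| = |x| ^ (m - 1) := by
  rcases eq_or_ne x 0 with rfl | hx
  · simp [phim, Real.zero_rpow (by linarith : m - 1 ≠ 0)]
  · rw [phim, abs_mul, abs_of_nonneg (Real.rpow_nonneg (abs_nonneg x) _),
      ← Real.rpow_add_one (abs_ne_zero.mpr hx)]
    ring_nf

lemma abs_phim_rpow (x : ℝ) : |phim m x| ^ (m / (m - 1)) = |x| ^ m := by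
  rw [abs_phim hm, ← Real.rpow_mul (abs_nonneg x)]
  congr 1
  field_simp
  exact div_self (by linarith)

lemma phim_inv (x : ℝ) : phim (m / (m - 1)) (phim m x) = x := by
  rcases eq_or_ne x 0 with rfl | hx
  · simp [phim]
  · have hax : (0:ℝ) < |x| := abs_pos.mpr hx
    have hm1 : m - 1 ≠ 0 := by linarith
    rw [phim, abs_phim hm, phim, ← Real.rpow_mul (abs_nonneg x), ← mul_assoc,
      ← Real.rpow_add hax]
    have : (m - 1) * (m / (m - 1) - 2) + (m - 2) = 0 := by field_simp; ring
    rw [this, Real.rpow_zero, one_mul]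

lemma mul_phim (x : ℝ) : x * phim m x = |x| ^ m := by
  rcases eq_or_ne x 0 with rfl | hx
  · simp [phim, Real.zero_rpow (by linarith : m ≠ 0)]
  · have hax : (0:ℝ) < |x| := abs_pos.mpr hx
    rw [phim]
    have : x * (|x| ^ (m-2) * x) = |x| ^ (m-2) * |x| ^ (2:ℝ) := by
      rw [Real.rpow_two, sq_abs]; ring
    rw [this, ← Real.rpow_add hax]
    ring_nf

end lems

/-- integrated Pohozaev inequality on an interval where `u·u' ≤ 0`
and `u'(R₁) = 0`. -/
theorem pohozaev_inequality
    (N m : ℝ) (hm : 1 < m) (hNm : m ≤ N) (f : ℝ → ℝ) (hf : Continuous f)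
    (R₁ R₂ : ℝ) (hR₁ : 0 < R₁) (hR : R₁ ≤ R₂)
    (u u' : ℝ → ℝ) (hu : IsSolutionOn N m f (Set.Icc R₁ R₂) u u')
    (hstart : u' R₁ = 0)
    (hmono : ∀ t ∈ Set.Icc R₁ R₂, u t * u' t ≤ 0) :
    ∀ r ∈ Set.Icc R₁ R₂,
      (∫ t in R₁..r, t ^ (N - 1) * Qfun N m f (u t)) ≤
        m * r ^ N * (|u' r| ^ m / (m / (m - 1)) + Fint f (u r))
          - m * R₁ ^ N * Fint f (u R₁) := by
  obtain ⟨hud, hu'c, w', hwd, hw'c, heq⟩ := hu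
  set J := Set.Icc R₁ R₂ with hJ
  have hJpos : ∀ t ∈ J, (0:ℝ) < t := fun t ht => lt_of_lt_of_le hR₁ ht.1
  have hJint : J ∩ Set.Ioi 0 = J := Set.inter_eq_left.mpr (fun t ht => hJpos t ht)
  rw [hJint] at hwd hw'c heq
  set q := m / (m - 1) with hq
  have hm0 : m ≠ 0 := by positivity
  have hm1 : m - 1 ≠ 0 := by linarith
  have hq1 : 1 < q := by
    rw [hq, lt_div_iff₀ (by linarith)]; linarith
  set w : ℝ → ℝ := fun t => phim m (u' t) with hw
  -- primitive
  have hF : ∀ s : ℝ, HasDerivAt (Fint f) (f s) s := by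
    intro s
    exact intervalIntegral.integral_hasDerivAt_right (hf.intervalIntegrable 0 s)
      (hf.stronglyMeasurableAtFilter _ _) hf.continuousAt
  have hFc : Continuous (Fint f) :=
    continuous_iff_continuousAt.mpr fun s => (hF s).continuousAt
  have habsq : Continuous (fun y : ℝ => |y| ^ q) :=
    continuous_iff_continuousAt.mpr fun y => (hasDerivAt_abs_rpow y hq1).continuousAt
  -- the Pohozaev function
  set P : ℝ → ℝ := fun t =>
    m * (t ^ N * (|u' t| ^ m / q + Fint f (u t))) +
      (N - m) * (t ^ (N - 1) * (u t * w t)) with hP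
  have Cu : ContinuousOn u J := fun t ht => (hud t ht).continuousWithinAt
  have Cw : ContinuousOn w J := fun t ht => (hwd t ht).continuousWithinAt
  have CE : ContinuousOn (fun t => |u' t| ^ m) J := by
    have : (fun t => |u' t| ^ m) = fun t => |w t| ^ q := by
      funext t; rw [hw]; exact (abs_phim_rpow hm (u' t)).symm
    rw [this]
    exact habsq.comp_continuousOn Cw
  have CpowN : ContinuousOn (fun t : ℝ => t ^ N) J :=
    fun t ht => (Real.continuousAt_rpow_const t N (Or.inl (hJpos t ht).ne')).continuousWithinAt
  have CpowN1 : ContinuousOn (fun t : ℝ => t ^ (N - 1)) J :=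
    fun t ht => (Real.continuousAt_rpow_const t (N-1) (Or.inl (hJpos t ht).ne')).continuousWithinAt
  have CP : ContinuousOn P J := by
    apply ContinuousOn.add
    · exact (CpowN.mul ((CE.div_const q).add (hFc.comp_continuousOn Cu))).const_smul m
    · exact (CpowN1.mul (Cu.mul Cw)).const_smul (N - m)
  intro r hr
  have hrpos : 0 < r := hJpos r hr
  have hIccJ : Set.Icc R₁ r ⊆ J := Set.Icc_subset_Icc_right hr.2
  -- the FTC step
  have key : (∫ t in R₁..r, t ^ (N - 1) * Qfun N m f (u t)) = P r - P R₁ := by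
    apply intervalIntegral.integral_eq_sub_of_hasDeriv_right_of_le hr.1
      (CP.mono hIccJ)
    · intro x hx
      have hxJ : x ∈ J := hIccJ (Set.mem_Icc.mpr ⟨hx.1.le, hx.2.le⟩)
      have hx0 : (0:ℝ) < x := hJpos x hxJ
      have hmem : J ∈ nhds x :=
        Icc_mem_nhds hx.1 (lt_of_lt_of_le hx.2 hr.2)
      have hux : HasDerivAt u (u' x) x := (hud x hxJ).hasDerivAt hmem
      have hwx : HasDerivAt w (w' x) x := (hwd x hxJ).hasDerivAt hmem
      have hEx : HasDerivAt (fun t => |u' t| ^ m / q) (u' x * w' x) x := by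
        have hG : HasDerivAt (fun y : ℝ => |y| ^ q / q) (phim q (w x)) (w x) := by
          have h := (hasDerivAt_abs_rpow (w x) hq1).div_const q
          have : q * |w x| ^ (q - 2) * w x / q = phim q (w x) := by
            rw [phim]; field_simp [(by positivity : q ≠ 0)]
          rwa [this] at h
        have h2 := hG.comp x hwx
        simp only [Function.comp_def] at h2
        have hfun : (fun t => |w t| ^ q / q) = (fun t => |u' t| ^ m / q) := by
          funext t; rw [hw]; rw [abs_phim_rpow hm]
        have hder : phim q (w x) * w' x = u' x * w' x := by
          rw [hw]; rw [phim_inv hm]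
        rw [hfun, hder] at h2
        exact h2
      have hFx : HasDerivAt (fun t => Fint f (u t)) (f (u x) * u' x) x :=
        (hF (u x)).comp x hux
      have hpowN : HasDerivAt (fun t : ℝ => t ^ N) (N * x ^ (N - 1)) x :=
        Real.hasDerivAt_rpow_const (Or.inl hx0.ne')
      have hpowN1 : HasDerivAt (fun t : ℝ => t ^ (N - 1)) ((N - 1) * x ^ (N - 1 - 1)) x :=
        Real.hasDerivAt_rpow_const (Or.inl hx0.ne')
      have hPx : HasDerivAt P
          (m * (N * x ^ (N - 1) * (|u' x| ^ m / q + Fint f (u x)) +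
            x ^ N * (u' x * w' x + f (u x) * u' x)) +
           (N - m) * ((N - 1) * x ^ (N - 1 - 1) * (u x * w x) +
            x ^ (N - 1) * (u' x * w x + u x * w' x))) x :=
        ((hpowN.mul (hEx.add hFx)).const_mul m).add
          ((hpowN1.mul (hux.mul hwx)).const_mul (N - m))
      have h1 : u' x * w x = |u' x| ^ m := by rw [hw]; exact mul_phim hm _
      have h2 : w' x = -((N - 1) / x * w x + f (u x)) := by
        have := heq x hxJ
        rw [hw]; linarith
      have h3 : u' x * w' x = -((N - 1) / x * |u' x| ^ m + f (u x) * u' x) := by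
        rw [h2, ← h1]; ring
      have h4 : u x * w' x = -((N - 1) / x * (u x * w x) + u x * f (u x)) := by
        rw [h2]; ring
      have e1 : x ^ N = x ^ (N - 1) * x := by
        rw [← Real.rpow_add_one hx0.ne']; ring_nf
      have e2 : x ^ (N - 1) = x ^ (N - 1 - 1) * x := by
        rw [← Real.rpow_add_one hx0.ne']; ring_nf
      have hDeq : m * (N * x ^ (N - 1) * (|u' x| ^ m / q + Fint f (u x)) +
            x ^ N * (u' x * w' x + f (u x) * u' x)) +
           (N - m) * ((N - 1) * x ^ (N - 1 - 1) * (u x * w x) +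
            x ^ (N - 1) * (u' x * w x + u x * w' x)) =
            x ^ (N - 1) * Qfun N m f (u x) := by
        rw [h3, h4, h1, Qfun, hq, e1, e2]
        field_simp
        ring
      rw [hDeq] at hPx
      exact hPx.hasDerivWithinAt
    · apply ContinuousOn.intervalIntegrable
      rw [Set.uIcc_of_le hr.1]
      have hQc : Continuous (Qfun N m f) := by
        unfold Qfun
        exact ((continuous_const.mul hFc).sub
          (((continuous_const.mul continuous_id).mul hf)))
      exact (CpowN1.mono hIccJ).mul (hQc.comp_continuousOn (Cu.mono hIccJ))
  rw [key]
  have hPR₁ : P R₁ = m * R₁ ^ N * Fint f (u R₁) := by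
    rw [hP]
    simp only [hw, hstart, phim_zero, abs_zero,
      Real.zero_rpow hm0, mul_zero, zero_div, zero_add, add_zero]
    ring
  have hT : (N - m) * (r ^ (N - 1) * (u r * w r)) ≤ 0 := by
    have h1 : u r * w r ≤ 0 := by
      rw [hw]
      have : u r * phim m (u' r) = |u' r| ^ (m - 2) * (u r * u' r) := by
        rw [phim]; ring
      rw [this]
      exact mul_nonpos_of_nonneg_of_nonpos (Real.rpow_nonneg (abs_nonneg _) _) (hmono r hr)
    have h2 : (0:ℝ) ≤ r ^ (N - 1) := Real.rpow_nonneg hrpos.le _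
    have := mul_nonpos_of_nonneg_of_nonpos h2 h1
    exact mul_nonpos_of_nonneg_of_nonpos (by linarith) this
  have hPr : P r = m * (r ^ N * (|u' r| ^ m / q + Fint f (u r))) +
      (N - m) * (r ^ (N - 1) * (u r * w r)) := rfl
  rw [hPR₁, hPr]
  nlinarith [hT]
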